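/- arXiv:1510.07440 — 19 statements merged into one kernel-verified Lean document; each statement's English description precedes it below -/
import Mathlib

section
/- Let R and T be rings with unity and let f : R → T be a surjective ring homomorphism. If R is a weak nil clean ring, then T is a weak nil clean ring. -/
/-- A ring is weak nil clean if every element is the sum or difference of a
nilpotent and an idempotent. -/
def WeakNilClean (R : Type*) [Ring R] : Prop :=
  ∀ x : R, ∃ n e : R, IsNilpotent n ∧ IsIdempotentElem e ∧ (x = n + e ∨ x = n - e)

theorem stmt_0 {R T : Type*} [Ring R] [Ring T] (f : R →+* T)
    (hf : Function.Surjective f) (hR : WeakNilClean R) : WeakNilClean T := by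
  intro x
  obtain ⟨r, rfl⟩ := hf x
  obtain ⟨n, e, hn, he, h⟩ := hR r
  refine ⟨f n, f e, hn.map f, ?_, ?_⟩
  · simpa [IsIdempotentElem, ← map_mul] using congrArg f he
  · rcases h with h | h
    · left; rw [h, map_add]
    · right; rw [h, map_sub]
end

section
/- Let {R_i}_{i ∈ I} be a finite family of rings with unity. The direct product R = Π_{i ∈ I} R_i is a weak nil clean ring if and only if each R_i is weak nil clean and there is at most one index i ∈ I such that R_i is not nil clean. -/
/-- A ring is nil clean if every element is the sum of a nilpotent and an idempotent. -/
def NilClean (R : Type*) [Ring R] : Prop :=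
  ∀ x : R, ∃ n e : R, IsNilpotent n ∧ IsIdempotentElem e ∧ x = n + e

private lemma pi_nilpotent {I : Type*} [Finite I] {R : I → Type*} [∀ i, Ring (R i)]
    {n : ∀ i, R i} (h : ∀ i, IsNilpotent (n i)) : IsNilpotent n := by
  cases nonempty_fintype I
  choose k hk using h
  refine ⟨Finset.univ.sup k, ?_⟩
  funext i
  rw [Pi.pow_apply]
  obtain ⟨m, hm⟩ := Nat.exists_eq_add_of_le (Finset.le_sup (Finset.mem_univ i) : k i ≤ _)
  rw [hm, pow_add, hk i, zero_mul]
  rfl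

/-- In a nil clean ring, every element is also a nilpotent minus an idempotent. -/
private lemma nilClean_minus {S : Type*} [Ring S] (h : NilClean S) (x : S) :
    ∃ n e : S, IsNilpotent n ∧ IsIdempotentElem e ∧ x = n - e := by
  obtain ⟨n, e, hn, he, hx⟩ := h (-x)
  refine ⟨-n, e, hn.neg, he, ?_⟩
  have : x = -(n + e) := by rw [← hx, neg_neg]
  rw [this]; abel

theorem stmt_1 {I : Type*} [Finite I] (R : I → Type*) [∀ i, Ring (R i)] :
    WeakNilClean (∀ i, R i) ↔
      (∀ i, WeakNilClean (R i)) ∧ {i | ¬ NilClean (R i)}.Subsingleton := by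
  classical
  constructor
  · intro h
    constructor
    · intro i x
      obtain ⟨n, e, hn, he, hx⟩ := h (Function.update (0 : ∀ k, R k) i x)
      have hni : IsNilpotent (n i) := by
        obtain ⟨m, hm⟩ := hn
        exact ⟨m, congrFun hm i⟩
      have hei : IsIdempotentElem (e i) := congrFun he i
      refine ⟨n i, e i, hni, hei, ?_⟩
      rcases hx with hx | hx
      · left
        have := congrFun hx i
        simpa [Function.update_self] using this
      · right
        have := congrFun hx i
        simpa [Function.update_self] using this
    · intro i hi j hj
      by_contra hij
      simp only [Set.mem_setOf_eq, NilClean] at hi hj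
      push_neg at hi hj
      obtain ⟨a, ha⟩ := hi
      obtain ⟨b, hb⟩ := hj
      set X : ∀ k, R k := Function.update (Function.update (0 : ∀ k, R k) i a) j (-b) with hX
      obtain ⟨n, e, hn, he, hx⟩ := h X
      have hni : IsNilpotent (n i) := by obtain ⟨m, hm⟩ := hn; exact ⟨m, congrFun hm i⟩
      have hnj : IsNilpotent (n j) := by obtain ⟨m, hm⟩ := hn; exact ⟨m, congrFun hm j⟩
      have hXi : X i = a := by
        rw [hX, Function.update_of_ne hij, Function.update_self]
      have hXj : X j = -b := Function.update_self j (-b) _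
      rcases hx with hx | hx
      · have := congrFun hx i
        rw [hXi] at this
        exact ha (n i) (e i) hni (congrFun he i) this
      · have := congrFun hx j
        rw [hXj] at this
        have hb' : b = -(n j) + e j := by
          have h2 : -b = n j - e j := by simpa [Pi.sub_apply] using this
          rw [← neg_neg b, h2]; abel
        exact hb (-(n j)) (e j) hnj.neg (congrFun he j) hb'
  · rintro ⟨hw, hs⟩ x
    by_cases hall : ∀ i, ∃ n e : R i, IsNilpotent n ∧ IsIdempotentElem e ∧ x i = n + e
    · choose n e hn he hx using hall
      refine ⟨n, e, pi_nilpotent hn, funext fun i => he i, Or.inl ?_⟩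
      funext i; exact hx i
    · obtain ⟨j, hj⟩ := not_forall.mp hall
      have hjbad : ¬ NilClean (R j) := fun hnc => hj (hnc (x j))
      have claim : ∀ i, ∃ n e : R i, IsNilpotent n ∧ IsIdempotentElem e ∧ x i = n - e := by
        intro i
        by_cases hic : NilClean (R i)
        · exact nilClean_minus hic (x i)
        · obtain rfl : i = j := hs hic hjbad
          obtain ⟨n, e, hn, he, hor⟩ := hw i (x i)
          rcases hor with hor | hor
          · exact absurd ⟨n, e, hn, he, hor⟩ hj
          · exact ⟨n, e, hn, he, hor⟩
      choose n e hn he hx using claim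
      refine ⟨n, e, pi_nilpotent hn, funext fun i => he i, Or.inr ?_⟩
      funext i; exact hx i
end

section
/- If R is a weak nil clean ring, then the Jacobson radical J(R) is contained in the set of nilpotent elements of R; that is, every element of J(R) is nilpotent. -/
private lemma idem_jac_zero {R : Type*} [Ring R] {e : R}
    (he : e ∈ Ideal.jacobson (⊥ : Ideal R)) (hi : IsIdempotentElem e) : e = 0 := by
  obtain ⟨z, hz⟩ := Ideal.mem_jacobson_iff.1 he (-1)
  rw [Ideal.mem_bot] at hz
  have h2 : z * -1 * e + z = 1 := by rwa [sub_eq_zero] at hz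
  have h1 : z - z * e = 1 := by rw [← h2]; noncomm_ring
  calc e = (z - z * e) * e := by rw [h1, one_mul]
    _ = z * e - z * (e * e) := by noncomm_ring
    _ = 0 := by rw [hi.eq, sub_self]

private lemma pow_sub_pow_mem_jac {R : Type*} [Ring R] {a b : R}
    (h : a - b ∈ Ideal.jacobson (⊥ : Ideal R)) (k : ℕ) :
    a ^ k - b ^ k ∈ Ideal.jacobson (⊥ : Ideal R) := by
  induction k with
  | zero => simp
  | succ k ih =>
    have h1 : a ^ (k + 1) - b ^ (k + 1) = a ^ k * (a - b) + (a ^ k - b ^ k) * b := by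
      rw [pow_succ, pow_succ]; noncomm_ring
    rw [h1]
    refine Ideal.add_mem _ (Ideal.mul_mem_left _ _ h) ?_
    exact Ideal.mul_mem_right _ _ ih

private lemma idem_zero_of_sub_nilpotent {R : Type*} [Ring R] {e m : R}
    (hi : IsIdempotentElem e) (hm : IsNilpotent m)
    (h : e - m ∈ Ideal.jacobson (⊥ : Ideal R)) : e = 0 := by
  obtain ⟨k, hk⟩ := hm
  have hk' : m ^ (k + 1) = 0 := by rw [pow_succ, hk, zero_mul]
  have := pow_sub_pow_mem_jac h (k + 1)
  rw [hk', sub_zero, hi.pow_succ_eq] at this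
  exact idem_jac_zero this hi

theorem stmt_2 {R : Type*} [Ring R] (hR : WeakNilClean R) :
    ∀ x ∈ Ideal.jacobson (⊥ : Ideal R), IsNilpotent x := by
  intro x hx
  obtain ⟨n, e, hn, hi, hcase⟩ := hR x
  rcases hcase with h | h
  · have hmem : e - (-n) ∈ Ideal.jacobson (⊥ : Ideal R) := by
      have : e - (-n) = x := by rw [h]; abel
      rwa [this]
    have e0 : e = 0 := idem_zero_of_sub_nilpotent hi hn.neg hmem
    rw [h, e0, add_zero]; exact hn
  · have hmem : e - n ∈ Ideal.jacobson (⊥ : Ideal R) := by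
      have : e - n = -x := by rw [h]; abel
      rw [this]
      exact neg_mem hx
    have e0 : e = 0 := idem_zero_of_sub_nilpotent hi hn hmem
    rw [h, e0, sub_zero]; exact hn
end

section
/- Let R be a commutative ring with unity such that the quotient ring R/Nil(R) by the nilradical is weak nil clean and idempotents lift modulo Nil(R) (i.e., for every y ∈ R with y² - y ∈ Nil(R) there exists an idempotent e ∈ R with y - e ∈ Nil(R)). Then R is weak nil clean. -/
private lemma nilp_of_quot {R : Type*} [CommRing R] {m : R}
    (h : IsNilpotent (Ideal.Quotient.mk (nilradical R) m)) : IsNilpotent m := by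
  obtain ⟨k, hk⟩ := h
  have : m ^ k ∈ nilradical R := by
    rwa [← Ideal.Quotient.eq_zero_iff_mem, map_pow]
  obtain ⟨j, hj⟩ := mem_nilradical.mp this
  exact ⟨k * j, by rw [pow_mul]; exact hj⟩

theorem stmt_3 {R : Type*} [CommRing R]
    (hq : WeakNilClean (R ⧸ nilradical R))
    (hlift : ∀ y : R, y ^ 2 - y ∈ nilradical R →
      ∃ e : R, IsIdempotentElem e ∧ y - e ∈ nilradical R) :
    WeakNilClean R := by
  intro x
  set π := Ideal.Quotient.mk (nilradical R)
  obtain ⟨n, e, hn, he, hcase⟩ := hq (π x)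
  obtain ⟨y, rfl⟩ := Ideal.Quotient.mk_surjective e
  have hy : y ^ 2 - y ∈ nilradical R := by
    rw [← Ideal.Quotient.eq_zero_iff_mem, map_sub, map_pow]
    have := he
    unfold IsIdempotentElem at this
    rw [← sq] at this
    rw [this, sub_self]
  obtain ⟨f, hf, hyf⟩ := hlift y hy
  have hpf : π f = π y := by
    rw [Ideal.Quotient.eq]
    simpa using (nilradical R).neg_mem hyf
  rcases hcase with h | h
  · refine ⟨x - f, f, ?_, hf, Or.inl (by ring)⟩
    apply nilp_of_quot
    rw [map_sub, hpf, h]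
    simpa [π] using hn
  · refine ⟨x + f, f, ?_, hf, Or.inr (by ring)⟩
    apply nilp_of_quot
    rw [map_add, hpf, h]
    simpa [π] using hn
end

section
/- Let R be a commutative ring with unity and M an R-module, and let R(M) = R ⊕ M denote the idealization (trivial square-zero extension) of R and M, with multiplication (r,m)(r',m') = (rr', rm' + r'm). Then R is weak nil clean if and only if R(M) is weak nil clean. -/
/-- The idealization `R(M) = R ⊕ M` of a commutative ring `R` and an `R`-module `M`
is the trivial square-zero extension `TrivSqZeroExt R M`, whose multiplication is
`(r, m) * (r', m') = (r * r', r • m' + r' • m)`. -/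
theorem stmt_4 {R : Type*} [CommRing R] (M : Type*) [AddCommGroup M] [Module R M]
    [Module Rᵐᵒᵖ M] [IsCentralScalar R M] :
    WeakNilClean R ↔ WeakNilClean (TrivSqZeroExt R M) := by
  constructor
  · intro h x
    obtain ⟨n, e, ⟨k, hk⟩, he, hx⟩ := h x.fst
    refine ⟨TrivSqZeroExt.inl n + TrivSqZeroExt.inr x.snd, TrivSqZeroExt.inl e, ⟨k + 1, ?_⟩,
      ?_, ?_⟩
    · ext
      · simp [hk, pow_succ]
      · simp [hk]
    · show _ * _ = _
      rw [← TrivSqZeroExt.inl_mul, he]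
    · rcases hx with hx | hx
      · left
        ext <;> simp [hx]
      · right
        ext <;> simp [hx]
  · intro h r
    obtain ⟨n, e, hn, he, hx⟩ := h (TrivSqZeroExt.inl r)
    refine ⟨n.fst, e.fst, hn.map (TrivSqZeroExt.fstHom R R M).toRingHom,
      congrArg TrivSqZeroExt.fst he, ?_⟩
    rcases hx with hx | hx
    · left; simpa using congrArg TrivSqZeroExt.fst hx
    · right; simpa using congrArg TrivSqZeroExt.fst hx
end

section
/- For every natural number k ≥ 1, the ring ℤ/3^kℤ of integers modulo 3^k is weak nil clean but not nil clean. -/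
lemma nilp_of_three_dvd (k : ℕ) (x : ZMod (3 ^ k)) (h : (3 : ZMod (3 ^ k)) ∣ x) :
    IsNilpotent x := by
  obtain ⟨y, rfl⟩ := h
  refine ⟨k, ?_⟩
  have h3 : (3 : ZMod (3 ^ k)) ^ k = 0 := by
    have h1 : ((3 ^ k : ℕ) : ZMod (3 ^ k)) = 0 := ZMod.natCast_self _
    push_cast at h1
    exact h1
  rw [mul_pow, h3, zero_mul]

theorem stmt_5 (k : ℕ) (hk : 1 ≤ k) :
    WeakNilClean (ZMod (3 ^ k)) ∧ ¬ NilClean (ZMod (3 ^ k)) := by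
  have hdvd : (3 : ℕ) ∣ 3 ^ k := dvd_pow_self 3 (by omega)
  constructor
  · intro x
    have hne : NeZero (3 ^ k) := ⟨by positivity⟩
    set m := x.val with hm
    have hx : ((m : ℕ) : ZMod (3 ^ k)) = x := by simp [hm]
    rcases (by omega : m % 3 = 0 ∨ m % 3 = 1 ∨ m % 3 = 2) with h | h | h
    · refine ⟨x, 0, ?_, by simp [IsIdempotentElem], Or.inl (by ring)⟩
      apply nilp_of_three_dvd
      obtain ⟨c, hc⟩ := (by omega : 3 ∣ m)
      exact ⟨(c : ZMod (3 ^ k)), by rw [← hx, hc]; push_cast; ring⟩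
    · refine ⟨x - 1, 1, ?_, by simp [IsIdempotentElem], Or.inl (by ring)⟩
      apply nilp_of_three_dvd
      obtain ⟨c, hc⟩ := (by omega : 3 ∣ m - 1)
      refine ⟨(c : ZMod (3 ^ k)), ?_⟩
      have hmc : m = 3 * c + 1 := by omega
      rw [← hx, hmc]; push_cast; ring
    · refine ⟨x + 1, 1, ?_, by simp [IsIdempotentElem], Or.inr (by ring)⟩
      apply nilp_of_three_dvd
      obtain ⟨c, hc⟩ := (by omega : 3 ∣ m + 1)
      refine ⟨(c : ZMod (3 ^ k)), ?_⟩
      have key : ((m : ℕ) : ZMod (3 ^ k)) + 1 = ((3 * c : ℕ) : ZMod (3 ^ k)) := by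
        rw [← hc]; push_cast; ring
      push_cast at key
      rw [← hx]
      linear_combination key
  · intro h
    obtain ⟨n, e, hn, he, heq⟩ := h 2
    let f : ZMod (3 ^ k) →+* ZMod 3 := ZMod.castHom hdvd (ZMod 3)
    have hn0 : f n = 0 := (hn.map f).eq_zero
    have he' : (f e) * (f e) = f e := by rw [← map_mul, he]
    have heq' : (2 : ZMod 3) = f n + f e := by
      have := congrArg f heq
      simpa [map_ofNat] using this
    rw [hn0, zero_add] at heq'
    generalize f e = a at he' heq'
    revert a
    decide
end

section
/- Let p be a prime number and k ≥ 1 a natural number. The ring ℤ/p^kℤ of integers modulo p^k is weak nil clean but not nil clean if and only if p = 3. -/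
section Aux

variable {p k : ℕ}

/-- If an element of `ZMod (p^k)` maps to `0` in `ZMod p`, it is nilpotent. -/
lemma nil_of_cast_zero (hp : p.Prime) (hk : 1 ≤ k) (x : ZMod (p ^ k))
    (hd : p ∣ p ^ k)
    (hx : ZMod.castHom hd (ZMod p) x = 0) : IsNilpotent x := by
  haveI : NeZero (p ^ k) := ⟨pow_ne_zero _ hp.ne_zero⟩
  have h1 : ((x.val : ℕ) : ZMod p) = 0 := by
    rw [ZMod.natCast_val, ← ZMod.castHom_apply (h := hd), hx]
  have h2 : p ∣ x.val := (ZMod.natCast_eq_zero_iff _ _).mp h1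
  obtain ⟨m, hm⟩ := h2
  have hx' : x = (p : ZMod (p ^ k)) * (m : ZMod (p ^ k)) := by
    have := ZMod.natCast_val (R := ZMod (p ^ k)) x
    rw [ZMod.cast_id] at this
    rw [← this, hm]; push_cast; ring
  refine ⟨k, ?_⟩
  rw [hx', mul_pow, ← Nat.cast_pow, ZMod.natCast_self, zero_mul]

/-- Nilpotents of `ZMod (p^k)` map to `0` in `ZMod p`. -/
lemma cast_zero_of_nil (hp : p.Prime) (x : ZMod (p ^ k)) (hd : p ∣ p ^ k)
    (hx : IsNilpotent x) : ZMod.castHom hd (ZMod p) x = 0 := by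
  haveI := Fact.mk hp
  exact (hx.map (ZMod.castHom hd (ZMod p))).eq_zero

/-- Idempotents of `ZMod (p^k)` are `0` or `1`. -/
lemma idem_eq_zero_or_one (hp : p.Prime) (hk : 1 ≤ k) (e : ZMod (p ^ k))
    (hd : p ∣ p ^ k) (he : IsIdempotentElem e) : e = 0 ∨ e = 1 := by
  haveI := Fact.mk hp
  set f := ZMod.castHom hd (ZMod p) with hf
  have hfe : f e * (f e - 1) = 0 := by
    have : f e * f e = f e := by rw [← map_mul, he]
    rw [mul_sub, this, mul_one, sub_self]
  have key : ∀ a : ZMod (p ^ k), IsIdempotentElem a → f a = 0 → a = 0 := by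
    intro a ha hfa
    obtain ⟨m, hm⟩ := nil_of_cast_zero hp hk a hd hfa
    have hpow : ∀ j : ℕ, a ^ (j + 1) = a := by
      intro j
      induction j with
      | zero => simp
      | succ n ih => rw [pow_succ, ih, ha]
    rcases Nat.eq_zero_or_pos m with h0 | h0
    · subst h0; simp at hm
      have : (1 : ZMod (p ^ k)) ≠ 0 := by
        haveI : Fact (1 < p ^ k) := ⟨Nat.one_lt_pow (Nat.one_le_iff_ne_zero.mp hk) hp.one_lt⟩
        exact one_ne_zero
      exact absurd hm this
    · obtain ⟨j, rfl⟩ := Nat.exists_eq_add_of_lt h0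
      rw [zero_add, hpow] at hm
      exact hm
  rcases mul_eq_zero.mp hfe with h | h
  · exact Or.inl (key e he h)
  · right
    have h1 : f (1 - e) = 0 := by
      rw [map_sub, map_one, sub_eq_zero]
      exact (sub_eq_zero.mp h).symm
    have := key (1 - e) he.one_sub h1
    linear_combination -this

lemma zmod2_cases : ∀ a : ZMod 2, a = 0 ∨ a = 1 := by decide

lemma zmod3_cases : ∀ a : ZMod 3, a = 0 ∨ a = 1 ∨ a = 2 := by decide

lemma zmod3_21 : (2 + 1 : ZMod 3) = 0 := by decide

lemma zmod3_2ne0 : (2 : ZMod 3) ≠ 0 := by decide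

lemma zmod3_2ne1 : (2 : ZMod 3) ≠ 1 := by decide

end Aux

theorem stmt_6 (p : ℕ) (hp : p.Prime) (k : ℕ) (hk : 1 ≤ k) :
    (WeakNilClean (ZMod (p ^ k)) ∧ ¬ NilClean (ZMod (p ^ k))) ↔ p = 3 := by
  haveI := Fact.mk hp
  haveI : NeZero (p ^ k) := ⟨pow_ne_zero _ hp.ne_zero⟩
  have hd : p ∣ p ^ k := dvd_pow_self p (Nat.one_le_iff_ne_zero.mp hk)
  set f := ZMod.castHom hd (ZMod p) with hf
  constructor
  · rintro ⟨hw, hn⟩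
    -- p ≠ 2 : otherwise ZMod (2^k) would be nil clean
    have hp2 : p ≠ 2 := by
      rintro rfl
      apply hn
      intro x
      rcases zmod2_cases (f x) with h | h
      · exact ⟨x, 0, nil_of_cast_zero hp hk x hd h, IsIdempotentElem.zero, by ring⟩
      · refine ⟨x - 1, 1, nil_of_cast_zero hp hk (x - 1) hd ?_, IsIdempotentElem.one, by ring⟩
        rw [map_sub, map_one, h, sub_self]
    -- from weak nil cleanness, 2 ≡ 0, 1 or -1 mod p
    obtain ⟨n, e, hnn, hee, h2⟩ := hw 2
    have hfn : f n = 0 := cast_zero_of_nil hp n hd hnn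
    have he01 := idem_eq_zero_or_one hp hk e hd hee
    have h2p : (2 : ZMod p) = 0 ∨ (2 : ZMod p) = 1 ∨ (2 : ZMod p) = -1 := by
      rcases h2 with h | h <;> have key := congrArg f h <;>
        rcases he01 with rfl | rfl <;>
        simp only [map_add, map_sub, map_zero, map_one, hfn, map_ofNat,
          zero_add, zero_sub, add_zero, sub_zero] at key
      · exact Or.inl key
      · exact Or.inr (Or.inl key)
      · exact Or.inl key
      · exact Or.inr (Or.inr key)
    rcases h2p with h | h | h
    · exfalso
      have h2' : ((2 : ℕ) : ZMod p) = 0 := by push_cast; linear_combination h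
      have hdvd : p ∣ 2 := (ZMod.natCast_eq_zero_iff 2 p).mp h2'
      exact hp2 ((Nat.prime_dvd_prime_iff_eq hp Nat.prime_two).mp hdvd)
    · exfalso
      have h1' : ((1 : ℕ) : ZMod p) = 0 := by push_cast; linear_combination h
      have hdvd : p ∣ 1 := (ZMod.natCast_eq_zero_iff 1 p).mp h1'
      exact absurd (Nat.dvd_one.mp hdvd) hp.one_lt.ne'
    · have h3' : ((3 : ℕ) : ZMod p) = 0 := by push_cast; linear_combination h
      have hdvd : p ∣ 3 := (ZMod.natCast_eq_zero_iff 3 p).mp h3'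
      exact (Nat.prime_dvd_prime_iff_eq hp Nat.prime_three).mp hdvd
  · rintro rfl
    constructor
    · -- ZMod (3^k) is weak nil clean
      intro x
      rcases zmod3_cases (f x) with h | h | h
      · exact ⟨x, 0, nil_of_cast_zero hp hk x hd h, IsIdempotentElem.zero, Or.inl (by ring)⟩
      · refine ⟨x - 1, 1, nil_of_cast_zero hp hk (x - 1) hd ?_, IsIdempotentElem.one,
          Or.inl (by ring)⟩
        rw [map_sub, map_one, h, sub_self]
      · refine ⟨x + 1, 1, nil_of_cast_zero hp hk (x + 1) hd ?_, IsIdempotentElem.one,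
          Or.inr (by ring)⟩
        rw [map_add, map_one, h]; exact zmod3_21
    · -- ZMod (3^k) is not nil clean
      intro hn
      obtain ⟨n, e, hnn, hee, h2⟩ := hn 2
      have hfn : f n = 0 := cast_zero_of_nil hp n hd hnn
      have key := congrArg f h2
      rcases idem_eq_zero_or_one hp hk e hd hee with rfl | rfl <;>
        simp only [map_add, map_zero, map_one, hfn, map_ofNat, zero_add, add_zero] at key
      · exact absurd key zmod3_2ne0
      · exact absurd key zmod3_2ne1
end

section
/- Let n ≥ 2 be a natural number. The ring ℤ/nℤ of integers modulo n is weak nil clean but not nil clean if and only if n = 2^r · 3^t for some natural numbers r ≥ 0 and t ≥ 1. -/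
lemma nilClean_of_surjective {R S : Type*} [Ring R] [Ring S] (f : R →+* S)
    (hf : Function.Surjective f) (h : NilClean R) : NilClean S := by
  intro y
  obtain ⟨x, rfl⟩ := hf y
  obtain ⟨a, e, ha, he, hx⟩ := h x
  exact ⟨f a, f e, ha.map f, by simpa [IsIdempotentElem, ← map_mul] using congrArg f he,
    by rw [hx, map_add]⟩

lemma weakNilClean_of_surjective {R S : Type*} [Ring R] [Ring S] (f : R →+* S)
    (hf : Function.Surjective f) (h : WeakNilClean R) : WeakNilClean S := by
  intro y
  obtain ⟨x, rfl⟩ := hf y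
  obtain ⟨a, e, ha, he, hx⟩ := h x
  refine ⟨f a, f e, ha.map f, by simpa [IsIdempotentElem, ← map_mul] using congrArg f he, ?_⟩
  rcases hx with hx | hx
  · exact Or.inl (by rw [hx, map_add])
  · exact Or.inr (by rw [hx, map_sub])

lemma zmod_castHom_surjective {m p : ℕ} [NeZero p] (h : p ∣ m) :
    Function.Surjective (ZMod.castHom h (ZMod p)) := by
  intro y
  obtain ⟨k, rfl⟩ := ZMod.natCast_zmod_surjective y
  exact ⟨(k : ZMod m), map_natCast _ k⟩

lemma idem_helper (m : ℕ) [NeZero m] (E c : ℤ) (h : E * E - E = (m : ℤ) * c) :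
    IsIdempotentElem ((E : ZMod m)) := by
  have h0 : ((E * E - E : ℤ) : ZMod m) = 0 :=
    (ZMod.intCast_zmod_eq_zero_iff_dvd _ _).2 ⟨c, h⟩
  push_cast at h0
  exact sub_eq_zero.mp h0

lemma nilm (r t : ℕ) (y : ℤ) (h2 : 2 ∣ y ∨ r = 0) (h3 : 3 ∣ y ∨ t = 0) :
    IsNilpotent ((y : ZMod (2 ^ r * 3 ^ t))) := by
  haveI : NeZero (2 ^ r * 3 ^ t) := NeZero.of_pos (by positivity)
  refine ⟨r + t, ?_⟩
  rw [← Int.cast_pow, ZMod.intCast_zmod_eq_zero_iff_dvd]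
  push_cast
  have hc : IsCoprime ((2 : ℤ) ^ r) ((3 : ℤ) ^ t) :=
    IsCoprime.pow (Int.isCoprime_iff_gcd_eq_one.mpr (by norm_num))
  apply hc.mul_dvd
  · rcases h2 with h2 | rfl
    · exact dvd_trans (pow_dvd_pow_of_dvd h2 r) (pow_dvd_pow y (Nat.le_add_right r t))
    · simpa using one_dvd _
  · rcases h3 with h3 | rfl
    · exact dvd_trans (pow_dvd_pow_of_dvd h3 t) (pow_dvd_pow y (Nat.le_add_left t r))
    · simpa using one_dvd _

lemma nilClean_two_pow (r : ℕ) : NilClean (ZMod (2 ^ r)) := by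
  haveI : NeZero (2 ^ r) := NeZero.of_pos (by positivity)
  intro x
  obtain ⟨k, rfl⟩ := ZMod.intCast_surjective x
  rcases Int.even_or_odd k with ⟨z, rfl⟩ | ⟨z, rfl⟩
  · refine ⟨_, 0, ⟨r, ?_⟩, IsIdempotentElem.zero, (add_zero _).symm⟩
    rw [← Int.cast_pow, ZMod.intCast_zmod_eq_zero_iff_dvd]
    exact ⟨z ^ r, by push_cast; rw [show z + z = 2 * z by ring, mul_pow]⟩
  · refine ⟨((2 * z : ℤ) : ZMod (2 ^ r)), 1, ⟨r, ?_⟩, IsIdempotentElem.one, ?_⟩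
    · rw [← Int.cast_pow, ZMod.intCast_zmod_eq_zero_iff_dvd]
      exact ⟨z ^ r, by push_cast; rw [mul_pow]⟩
    · push_cast; ring

lemma eq_two_pow_mul_three_pow : ∀ n : ℕ, n ≠ 0 →
    (∀ p, p.Prime → p ∣ n → p = 2 ∨ p = 3) → ∃ r t, n = 2 ^ r * 3 ^ t := by
  intro n
  induction n using Nat.strong_induction_on with
  | _ n ih =>
    intro hn h
    rcases eq_or_ne n 1 with rfl | h1
    · exact ⟨0, 0, rfl⟩
    · have hp := Nat.minFac_prime h1
      have hd : n.minFac ∣ n := Nat.minFac_dvd n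
      obtain ⟨m, hm⟩ := hd
      have hm0 : m ≠ 0 := by rintro rfl; simp at hm; omega
      have hlt : m < n := by
        rw [hm]
        have h2 := hp.two_le
        calc m = 1 * m := (one_mul m).symm
        _ < n.minFac * m := by
          apply Nat.mul_lt_mul_of_lt_of_le (by omega) le_rfl (by omega)
      obtain ⟨r, t, hrt⟩ := ih m hlt hm0 (fun q hq hqd => h q hq (hm ▸ hqd.mul_left n.minFac))
      rcases h n.minFac hp ⟨m, hm⟩ with he | he
      · exact ⟨r + 1, t, by rw [hm, hrt, he]; ring⟩
      · exact ⟨r, t + 1, by rw [hm, hrt, he]; ring⟩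

lemma not_nilClean_of_three_dvd {m : ℕ} [NeZero m] (h3 : 3 ∣ m) : ¬ NilClean (ZMod m) := by
  intro h
  have h3' : NilClean (ZMod 3) :=
    nilClean_of_surjective (ZMod.castHom h3 (ZMod 3)) (zmod_castHom_surjective h3) h
  obtain ⟨a, e, ha, he, hx⟩ := h3' 2
  have d0 : (2 : ZMod 3) ≠ 0 := by decide
  have d1 : (2 : ZMod 3) ≠ 1 := by decide
  haveI : Fact (Nat.Prime 3) := ⟨by norm_num⟩
  have ha0 : a = 0 := ha.eq_zero
  have he' : e = 0 ∨ e = 1 := by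
    have h0 : e * (e - 1) = 0 := by rw [mul_sub, he]; ring
    rcases mul_eq_zero.1 h0 with h0 | h0
    · exact Or.inl h0
    · exact Or.inr (sub_eq_zero.mp h0)
  rcases he' with rfl | rfl <;> rw [ha0, zero_add] at hx
  · exact d0 hx
  · exact d1 hx

lemma weakNilClean_main (r t' : ℕ) : WeakNilClean (ZMod (2 ^ r * 3 ^ (t' + 1))) := by
  haveI : NeZero (2 ^ r * 3 ^ (t' + 1)) := NeZero.of_pos (by positivity)
  rcases Nat.eq_zero_or_pos r with rfl | hr
  · intro x
    obtain ⟨k, rfl⟩ := ZMod.intCast_surjective x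
    have hk3 : k % 3 = 0 ∨ k % 3 = 1 ∨ k % 3 = 2 := by omega
    rcases hk3 with hk | hk | hk
    · exact ⟨_, 0, nilm 0 (t' + 1) k (Or.inr rfl) (Or.inl (by omega)),
        IsIdempotentElem.zero, Or.inl (add_zero _).symm⟩
    · exact ⟨((k - 1 : ℤ) : ZMod _), 1, nilm 0 (t' + 1) (k - 1) (Or.inr rfl) (Or.inl (by omega)),
        IsIdempotentElem.one, Or.inl (by push_cast; ring)⟩
    · exact ⟨((k + 1 : ℤ) : ZMod _), 1, nilm 0 (t' + 1) (k + 1) (Or.inr rfl) (Or.inl (by omega)),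
        IsIdempotentElem.one, Or.inr (by push_cast; ring)⟩
  · -- r ≥ 1 : build the nontrivial idempotent E with E ≡ 1 mod 2, E ≡ 0 mod 3
    have hcop : IsCoprime ((2 : ℤ) ^ r) ((3 : ℤ) ^ (t' + 1)) :=
      IsCoprime.pow (Int.isCoprime_iff_gcd_eq_one.mpr (by norm_num))
    obtain ⟨u, v, huv⟩ := hcop
    obtain ⟨E, hE2, hE3, hEidem⟩ :
        ∃ E : ℤ, 2 ∣ E - 1 ∧ 3 ∣ E ∧ IsIdempotentElem ((E : ZMod (2 ^ r * 3 ^ (t' + 1)))) := by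
      refine ⟨v * 3 ^ (t' + 1), ?_, ⟨v * 3 ^ t', by ring⟩, ?_⟩
      · have h1 : v * 3 ^ (t' + 1) - 1 = -(u * 2 ^ r) := by linarith
        rw [h1]
        exact (((dvd_pow_self (2 : ℤ) hr.ne').mul_left u)).neg_right
      · exact idem_helper _ _ (-(u * v)) (by push_cast; linear_combination (v * 3 ^ (t' + 1)) * huv)
    have hE1idem : IsIdempotentElem (((1 - E : ℤ) : ZMod (2 ^ r * 3 ^ (t' + 1)))) := by
      have hc : ((1 - E : ℤ) : ZMod (2 ^ r * 3 ^ (t' + 1))) = 1 - (E : ZMod _) := by push_cast; ring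
      rw [hc]; exact hEidem.one_sub
    intro x
    obtain ⟨k, rfl⟩ := ZMod.intCast_surjective x
    have hk2 : k % 2 = 0 ∨ k % 2 = 1 := by omega
    have hk3 : k % 3 = 0 ∨ k % 3 = 1 ∨ k % 3 = 2 := by omega
    rcases hk2 with hk2 | hk2 <;> rcases hk3 with hk3 | hk3 | hk3
    · -- (0,0) : e = 0
      exact ⟨_, 0, nilm r (t' + 1) k (Or.inl (by omega)) (Or.inl (by omega)),
        IsIdempotentElem.zero, Or.inl (add_zero _).symm⟩
    · -- (0,1) : e = 1 - E, sign +
      exact ⟨((k - (1 - E) : ℤ) : ZMod _), _,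
        nilm r (t' + 1) (k - (1 - E)) (Or.inl (by omega)) (Or.inl (by omega)),
        hE1idem, Or.inl (by push_cast; ring)⟩
    · -- (0,2) : e = 1 - E, sign -
      exact ⟨((k + (1 - E) : ℤ) : ZMod _), _,
        nilm r (t' + 1) (k + (1 - E)) (Or.inl (by omega)) (Or.inl (by omega)),
        hE1idem, Or.inr (by push_cast; ring)⟩
    · -- (1,0) : e = E, sign +
      exact ⟨((k - E : ℤ) : ZMod _), _,
        nilm r (t' + 1) (k - E) (Or.inl (by omega)) (Or.inl (by omega)),
        hEidem, Or.inl (by push_cast; ring)⟩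
    · -- (1,1) : e = 1, sign +
      exact ⟨((k - 1 : ℤ) : ZMod _), 1,
        nilm r (t' + 1) (k - 1) (Or.inl (by omega)) (Or.inl (by omega)),
        IsIdempotentElem.one, Or.inl (by push_cast; ring)⟩
    · -- (1,2) : e = 1, sign -
      exact ⟨((k + 1 : ℤ) : ZMod _), 1,
        nilm r (t' + 1) (k + 1) (Or.inl (by omega)) (Or.inl (by omega)),
        IsIdempotentElem.one, Or.inr (by push_cast; ring)⟩

theorem stmt_7 (n : ℕ) (hn : 2 ≤ n) :
    (WeakNilClean (ZMod n) ∧ ¬ NilClean (ZMod n)) ↔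
      ∃ r t : ℕ, 1 ≤ t ∧ n = 2 ^ r * 3 ^ t := by
  haveI : NeZero n := NeZero.of_pos (by omega)
  constructor
  · rintro ⟨hw, hnc⟩
    have h23 : ∀ p, p.Prime → p ∣ n → p = 2 ∨ p = 3 := by
      intro p hp hpd
      haveI : Fact p.Prime := ⟨hp⟩
      have hwp : WeakNilClean (ZMod p) :=
        weakNilClean_of_surjective (ZMod.castHom hpd (ZMod p)) (zmod_castHom_surjective hpd) hw
      obtain ⟨a, e, ha, he, hx⟩ := hwp 2
      have ha0 : a = 0 := ha.eq_zero
      have he' : e = 0 ∨ e = 1 := by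
        have h0 : e * (e - 1) = 0 := by rw [mul_sub, he]; ring
        rcases mul_eq_zero.1 h0 with h0 | h0
        · exact Or.inl h0
        · exact Or.inr (sub_eq_zero.mp h0)
      rw [ha0] at hx
      have hmem : (2 : ZMod p) = 0 ∨ (2 : ZMod p) = 1 ∨ (2 : ZMod p) = -1 := by
        rcases he' with rfl | rfl <;> rcases hx with hx | hx <;> simp [hx]
      rcases hmem with hx | hx | hx
      · left
        have : ((2 : ℕ) : ZMod p) = 0 := by exact_mod_cast hx
        have := (ZMod.natCast_eq_zero_iff 2 p).1 this
        exact ((Nat.prime_dvd_prime_iff_eq hp Nat.prime_two).1 this)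
      · exfalso
        have h1 : ((1 : ℕ) : ZMod p) = 0 := by push_cast; linear_combination hx
        have hd1 := (ZMod.natCast_eq_zero_iff 1 p).1 h1
        have := Nat.dvd_one.mp hd1
        have := hp.two_le
        omega
      · right
        have h3 : ((3 : ℕ) : ZMod p) = 0 := by
          have : (2 : ZMod p) + 1 = 0 := by rw [hx]; ring
          push_cast
          linear_combination this
        have := (ZMod.natCast_eq_zero_iff 3 p).1 h3
        exact ((Nat.prime_dvd_prime_iff_eq hp (by norm_num)).1 this)
    obtain ⟨r, t, hrt⟩ := eq_two_pow_mul_three_pow n (by omega) h23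
    refine ⟨r, t, ?_, hrt⟩
    by_contra ht
    have ht0 : t = 0 := by omega
    rw [ht0, pow_zero, mul_one] at hrt
    exact hnc (hrt ▸ nilClean_two_pow r)
  · rintro ⟨r, t, ht, rfl⟩
    obtain ⟨t', rfl⟩ : ∃ t', t = t' + 1 := ⟨t - 1, by omega⟩
    haveI : NeZero (2 ^ r * 3 ^ (t' + 1)) := NeZero.of_pos (by positivity)
    refine ⟨weakNilClean_main r t', not_nilClean_of_three_dvd ?_⟩
    exact Dvd.dvd.mul_left (dvd_pow_self 3 (Nat.succ_ne_zero t')) _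
end

section
/- If R is a nontrivial commutative ring with unity, then the polynomial ring R[x] is not weak nil clean; in fact, the polynomial x cannot be written as n + e or n - e with n nilpotent and e idempotent in R[x]. -/
theorem stmt_8 {R : Type*} [CommRing R] [Nontrivial R] :
    ¬ WeakNilClean (Polynomial R) ∧
      ∀ n e : Polynomial R, IsNilpotent n → IsIdempotentElem e →
        Polynomial.X ≠ n + e ∧ Polynomial.X ≠ n - e := by
  have key : ∀ n e : Polynomial R, IsNilpotent n → IsIdempotentElem e →
      Polynomial.X ≠ n + e ∧ Polynomial.X ≠ n - e := by
    intro n e hn he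
    -- pass to R / nilradical R
    set I := nilradical R with hI
    have hIne : I ≠ ⊤ := by
      intro h
      have h1 : (1 : R) ∈ nilradical R := by rw [← hI, h]; trivial
      obtain ⟨k, hk⟩ := h1
      simpa using hk
    haveI : Nontrivial (R ⧸ I) := Ideal.Quotient.nontrivial_iff.mpr hIne
    set f : Polynomial R →+* Polynomial (R ⧸ I) :=
      Polynomial.mapRingHom (Ideal.Quotient.mk I) with hf
    have hfn : f n = 0 := by
      ext i
      simp only [hf, Polynomial.coe_mapRingHom, Polynomial.coeff_map, Polynomial.coeff_zero]
      rw [Ideal.Quotient.eq_zero_iff_mem, hI]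
      exact (Polynomial.isNilpotent_iff.mp hn) i
    have hfe : IsIdempotentElem (f e) := by
      unfold IsIdempotentElem
      rw [← map_mul, he]
    have hfX : f Polynomial.X = Polynomial.X := Polynomial.map_X _
    constructor
    · intro h
      have h2 : (Polynomial.X : Polynomial (R ⧸ I)) = f e := by
        rw [← hfX, h, map_add, hfn, zero_add]
      have : (Polynomial.X : Polynomial (R ⧸ I)) * Polynomial.X = Polynomial.X := by
        rw [h2]; exact hfe
      have := congrArg (fun p => Polynomial.coeff p 2) this
      simp [Polynomial.coeff_X] at this
    · intro h
      have h2 : (Polynomial.X : Polynomial (R ⧸ I)) = -(f e) := by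
        rw [← hfX, h, map_sub, hfn, zero_sub]
      have : (Polynomial.X : Polynomial (R ⧸ I)) * Polynomial.X = -Polynomial.X := by
        rw [h2, neg_mul_neg, hfe, neg_neg]
      have := congrArg (fun p => Polynomial.coeff p 2) this
      simp [Polynomial.coeff_X] at this
  refine ⟨?_, key⟩
  intro h
  obtain ⟨n, e, hn, he, hcase⟩ := h Polynomial.X
  rcases hcase with h' | h'
  · exact (key n e hn he).1 h'
  · exact (key n e hn he).2 h'
end

section
/- Let R be a ring and let x ∈ R have a weak* nil clean decomposition, i.e., x = n + e or x = n - e where n is nilpotent, e is idempotent, and ne = en. Then for every r ∈ R: if rx = 0 then re = 0, and if xr = 0 then er = 0. (That is, the left annihilator of x is contained in the left annihilator of e, and likewise on the right.) -/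
private lemma cancel_right' {R : Type*} [Ring R] {a u : R} (hu : IsUnit u)
    (h : a * u = 0) : a = 0 := by
  obtain ⟨v, rfl⟩ := hu
  have := congrArg (· * (↑v⁻¹ : R)) h
  simpa [mul_assoc] using this

private lemma cancel_left' {R : Type*} [Ring R] {a u : R} (hu : IsUnit u)
    (h : u * a = 0) : a = 0 := by
  obtain ⟨v, rfl⟩ := hu
  have := congrArg ((↑v⁻¹ : R) * ·) h
  simpa [← mul_assoc] using this

theorem stmt_9 {R : Type*} [Ring R] (x n e : R)
    (hn : IsNilpotent n) (he : IsIdempotentElem e) (hcomm : n * e = e * n)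
    (hx : x = n + e ∨ x = n - e) :
    ∀ r : R, (r * x = 0 → r * e = 0) ∧ (x * r = 0 → e * r = 0) := by
  intro r
  constructor
  · intro hrx
    rcases hx with h | h
    · rw [h, mul_add] at hrx
      have h1 : r * e = -(r * n) := eq_neg_of_add_eq_zero_right hrx
      have key : r * e = -(r * e * n) := by
        calc r * e = r * e * e := by rw [mul_assoc, he]
          _ = -(r * n) * e := by rw [h1]
          _ = -(r * (n * e)) := by noncomm_ring
          _ = -(r * (e * n)) := by rw [hcomm]
          _ = -(r * e * n) := by noncomm_ring
      have h2 : r * e * (1 + n) = 0 := by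
        rw [mul_add, mul_one]
        nth_rewrite 1 [key]
        exact neg_add_cancel _
      exact cancel_right' hn.isUnit_one_add h2
    · rw [h, mul_sub, sub_eq_zero] at hrx
      have key : r * e = r * e * n := by
        calc r * e = r * e * e := by rw [mul_assoc, he]
          _ = r * n * e := by rw [← hrx]
          _ = r * (n * e) := by rw [mul_assoc]
          _ = r * (e * n) := by rw [hcomm]
          _ = r * e * n := by rw [mul_assoc]
      have h2 : r * e * (1 - n) = 0 := by
        rw [mul_sub, mul_one, ← key, sub_self]
      exact cancel_right' hn.isUnit_one_sub h2
  · intro hxr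
    rcases hx with h | h
    · rw [h, add_mul] at hxr
      have h1 : e * r = -(n * r) := eq_neg_of_add_eq_zero_right hxr
      have key : e * r = -(n * (e * r)) := by
        calc e * r = e * (e * r) := by rw [← mul_assoc, he]
          _ = e * -(n * r) := by rw [h1]
          _ = -(e * n * r) := by noncomm_ring
          _ = -(n * e * r) := by rw [hcomm]
          _ = -(n * (e * r)) := by rw [mul_assoc]
      have h2 : (1 + n) * (e * r) = 0 := by
        rw [add_mul, one_mul]
        nth_rewrite 1 [key]
        exact neg_add_cancel _
      exact cancel_left' hn.isUnit_one_add h2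
    · rw [h, sub_mul, sub_eq_zero] at hxr
      have key : e * r = n * (e * r) := by
        calc e * r = e * (e * r) := by rw [← mul_assoc, he]
          _ = e * (n * r) := by rw [← hxr]
          _ = e * n * r := by rw [mul_assoc]
          _ = n * e * r := by rw [hcomm]
          _ = n * (e * r) := by rw [mul_assoc]
      have h2 : (1 - n) * (e * r) = 0 := by
        rw [sub_mul, one_mul, ← key, sub_self]
      exact cancel_left' hn.isUnit_one_sub h2
end

section
/- Let R be a ring, f ∈ R an idempotent, and x ∈ R with x = fxf. Then x has a weak* nil clean decomposition in R (i.e., x = n + e or x = n - e with n nilpotent, e idempotent, ne = en) if and only if x has such a decomposition inside the corner ring fRf, i.e., there exist n, e ∈ R with fnf = n, fef = e, n nilpotent, e² = e, ne = en, and x = n + e or x = n - e. -/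
private lemma pow_sub_self_aux {R : Type*} [Ring R] (x : R) (k : ℕ) :
    ∃ p : R, Commute x p ∧ x ^ (k + 1) - x = (x - x * x) * p := by
  induction k with
  | zero => exact ⟨0, Commute.zero_right x, by simp⟩
  | succ k ih =>
    obtain ⟨p, hp, he⟩ := ih
    have hxt : Commute x (x - x * x) :=
      (Commute.refl x).sub_right ((Commute.refl x).mul_right (Commute.refl x))
    refine ⟨x * p - 1, ((Commute.refl x).mul_right hp).sub_right (Commute.one_right x), ?_⟩
    calc x ^ (k + 1 + 1) - x = x * x ^ (k + 1) - x := by rw [pow_succ']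
      _ = x * (x ^ (k + 1) - x) + (x * x - x) := by noncomm_ring
      _ = x * ((x - x * x) * p) - (x - x * x) := by rw [he]; noncomm_ring
      _ = (x - x * x) * (x * p) - (x - x * x) := by
            rw [← mul_assoc, hxt.eq, mul_assoc]
      _ = (x - x * x) * (x * p - 1) := by noncomm_ring

private lemma lemA {R : Type*} [Ring R] (x : R) (h : IsNilpotent (x - x * x)) :
    ∃ e v : R, IsIdempotentElem e ∧ IsNilpotent (x - e) ∧ Commute x v ∧ e = x * v := by
  obtain ⟨m, hm⟩ := h
  set t := x - x * x with ht
  have hxt : Commute x t :=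
    (Commute.refl x).sub_right ((Commute.refl x).mul_right (Commute.refl x))
  set M := m + 1 with hM
  have htM : t ^ M = 0 := by rw [hM, pow_succ, hm, zero_mul]
  obtain ⟨p, hp, hxp⟩ := pow_sub_self_aux x m
  obtain ⟨q, hq, hyq⟩ := pow_sub_self_aux (1 - x) m
  have hbase : (1 - x) - (1 - x) * (1 - x) = t := by rw [ht]; noncomm_ring
  rw [hbase] at hyq
  have hxq : Commute x q := by
    have h1 := (Commute.one_left q).sub_left hq
    simpa using h1
  set u := x ^ M + (1 - x) ^ M with hu
  have hu1 : u - 1 = t * (p + q) := by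
    have h2 : u - 1 = (x ^ M - x) + ((1 - x) ^ M - (1 - x)) := by
      rw [hu]; noncomm_ring
    rw [h2, hM, hxp, hyq, ← mul_add]
  have htp : Commute t p := by rw [ht]; exact hp.sub_left (hp.mul_left hp)
  have htq : Commute t q := by rw [ht]; exact hxq.sub_left (hxq.mul_left hxq)
  have htnil : IsNilpotent t := ⟨m, hm⟩
  have hunil : IsNilpotent (u - 1) := by
    rw [hu1]; exact (htp.add_right htq).isNilpotent_mul_right htnil
  have huunit : IsUnit u := by
    have := hunil.isUnit_one_add
    simpa using this
  obtain ⟨w, hw⟩ := huunit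
  have hx1x : Commute x (1 - x) := (Commute.one_right x).sub_right (Commute.refl x)
  have hxu : Commute x u := by
    rw [hu]; exact ((Commute.refl x).pow_right M).add_right (hx1x.pow_right M)
  have hxw : Commute x (w : R) := by rw [hw]; exact hxu
  have hxwinv : Commute x ((w⁻¹ : Rˣ) : R) := hxw.units_inv_right
  have hkey : x ^ M * u = x ^ M * x ^ M := by
    have h1 : x ^ M * (1 - x) ^ M = t ^ M := by
      rw [← hx1x.mul_pow]
      congr 1
      rw [ht]; noncomm_ring
    rw [hu, mul_add, h1, htM, add_zero]
  have hstep : x ^ M * x ^ M * ((w⁻¹ : Rˣ) : R) = x ^ M := by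
    rw [← hkey, ← hw, mul_assoc, Units.mul_inv, mul_one]
  set e := x ^ M * ((w⁻¹ : Rˣ) : R) with he
  have hcMw : Commute (x ^ M) ((w⁻¹ : Rˣ) : R) := hxwinv.pow_left M
  have hidem : IsIdempotentElem e := by
    show e * e = e
    calc e * e = x ^ M * (((w⁻¹ : Rˣ) : R) * x ^ M) * ((w⁻¹ : Rˣ) : R) := by
          rw [he]; noncomm_ring
      _ = x ^ M * (x ^ M * ((w⁻¹ : Rˣ) : R)) * ((w⁻¹ : Rˣ) : R) := by rw [← hcMw.eq]
      _ = (x ^ M * x ^ M * ((w⁻¹ : Rˣ) : R)) * ((w⁻¹ : Rˣ) : R) := by noncomm_ring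
      _ = x ^ M * ((w⁻¹ : Rˣ) : R) := by rw [hstep]
      _ = e := he.symm
  set a := x ^ m with ha
  set b := (1 - x) ^ m with hb
  have hxa : x * a = a * x := ((Commute.refl x).pow_right m).eq
  have hxb : x * b = b * x := (hx1x.pow_right m).eq
  have hfac : x * u - x ^ M = (b - a) * (x - x * x) := by
    have hu' : u = a * x + b * (1 - x) := by rw [hu, hM, pow_succ, pow_succ]
    have hxM' : x ^ M = a * x := by rw [hM, pow_succ]
    rw [hu', hxM', mul_add, ← mul_assoc, hxa, ← mul_assoc, hxb]
    noncomm_ring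
  have hdiff : x - e = (b - a) * t * ((w⁻¹ : Rˣ) : R) := by
    have h3 : (x * u - x ^ M) * ((w⁻¹ : Rˣ) : R) = x - e := by
      rw [sub_mul, he, ← hw, mul_assoc, Units.mul_inv, mul_one]
    rw [← h3, hfac, ht]
  have hta : Commute t a := hxt.symm.pow_right m
  have htb : Commute t b := ((Commute.one_right t).sub_right hxt.symm).pow_right m
  have hnil_xe : IsNilpotent (x - e) := by
    rw [hdiff]
    have h1 : IsNilpotent ((b - a) * t) :=
      (htb.symm.sub_left hta.symm).isNilpotent_mul_left htnil
    have haw : Commute a ((w⁻¹ : Rˣ) : R) := hxwinv.pow_left m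
    have hbw : Commute b ((w⁻¹ : Rˣ) : R) :=
      ((Commute.one_left _).sub_left hxwinv).pow_left m
    have htw : Commute t ((w⁻¹ : Rˣ) : R) := by
      rw [ht]; exact hxwinv.sub_left (hxwinv.mul_left hxwinv)
    exact (((hbw.sub_left haw).mul_left htw).isNilpotent_mul_right h1)
  refine ⟨e, x ^ m * ((w⁻¹ : Rˣ) : R), hidem, hnil_xe,
    ((Commute.refl x).pow_right m).mul_right hxwinv, ?_⟩
  rw [he, hM, pow_succ', mul_assoc]

theorem stmt_10 {R : Type*} [Ring R] (f : R) (hf : IsIdempotentElem f)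
    (x : R) (hx : x = f * x * f) :
    (∃ n e : R, IsNilpotent n ∧ IsIdempotentElem e ∧ n * e = e * n ∧
        (x = n + e ∨ x = n - e)) ↔
      (∃ n e : R, f * n * f = n ∧ f * e * f = e ∧ IsNilpotent n ∧
        IsIdempotentElem e ∧ n * e = e * n ∧ (x = n + e ∨ x = n - e)) := by
  have hfx : f * x = x := by
    rw [hx, ← mul_assoc, ← mul_assoc, hf]
  have hxf : x * f = x := by
    rw [hx, mul_assoc, hf]
  constructor
  · rintro ⟨n, e, hn, he, hcomm, hxe | hxe⟩
    · -- x = n + e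
      have hnil : IsNilpotent (x - x * x) := by
        have key : x - x * x = n * (1 - n - (e + e)) := by
          rw [hxe, show (n + e) * (n + e) = n * n + n * e + (e * n + e * e) from by
            noncomm_ring, he, ← hcomm]
          noncomm_ring
        rw [key]
        have hne : Commute n e := hcomm
        exact (((Commute.one_right n).sub_right (Commute.refl n)).sub_right
          (hne.add_right hne)).isNilpotent_mul_right hn
      obtain ⟨e', v, he', hnil', hxv, hev⟩ := lemA x hnil
      have hfe : f * e' = e' := by rw [hev, ← mul_assoc, hfx]
      have hef : e' * f = e' := by rw [hev, hxv.eq, mul_assoc, hxf]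
      have hxe' : Commute x e' := by rw [hev]; exact (Commute.refl x).mul_right hxv
      refine ⟨x - e', e', ?_, ?_, hnil', he', ?_, Or.inl (by noncomm_ring)⟩
      · rw [mul_sub, sub_mul, hfx, hxf, hfe, hef]
      · rw [hfe, hef]
      · exact (hxe'.sub_left (Commute.refl e')).eq
    · -- x = n - e
      have hnil : IsNilpotent ((-x) - (-x) * (-x)) := by
        have key : x + x * x = n * (1 + n - (e + e)) := by
          rw [hxe, show (n - e) * (n - e) = n * n - n * e - (e * n - e * e) from by
            noncomm_ring, he, ← hcomm]
          noncomm_ring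
        rw [show (-x) - (-x) * (-x) = -(x + x * x) from by noncomm_ring, key]
        have hne : Commute n e := hcomm
        exact ((((Commute.one_right n).add_right (Commute.refl n)).sub_right
          (hne.add_right hne)).isNilpotent_mul_right hn).neg
      obtain ⟨e', v, he', hnil', hxv', hev'⟩ := lemA (-x) hnil
      have hxv : Commute x (-v) := by
        have := hxv'.neg_left
        rw [neg_neg] at this
        exact this.neg_right
      have hev : e' = x * (-v) := by rw [hev']; noncomm_ring
      have hfe : f * e' = e' := by rw [hev, ← mul_assoc, hfx]
      have hef : e' * f = e' := by rw [hev, hxv.eq, mul_assoc, hxf]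
      have hxe' : Commute x e' := by rw [hev]; exact (Commute.refl x).mul_right hxv
      have hnil2 : IsNilpotent (x + e') := by
        rw [show x + e' = -((-x) - e') from by noncomm_ring]
        exact hnil'.neg
      refine ⟨x + e', e', ?_, ?_, hnil2, he', ?_, Or.inr (by noncomm_ring)⟩
      · rw [mul_add, add_mul, hfx, hxf, hfe, hef]
      · rw [hfe, hef]
      · exact (hxe'.add_left (Commute.refl e')).eq
  · rintro ⟨n, e, _, _, hn, he, hc, h⟩
    exact ⟨n, e, hn, he, hc, h⟩
end

section
/- Let R be a weak* nil clean ring and f ∈ R an idempotent. Then the corner ring fRf is weak* nil clean: for every x ∈ R with x = fxf, there exist n, e ∈ R with fnf = n, fef = e, n nilpotent, e² = e, ne = en, and x = n + e or x = n - e. -/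
/-- Key lemma: if `x - x^2` is nilpotent, then `x` is strongly nil clean, with the
idempotent a polynomial in `x` (hence commuting with anything commuting with `x`). -/
private lemma weakStar_key {R : Type*} [Ring R] (x : R) (hx : IsNilpotent (x - x ^ 2)) :
    ∃ e : R, IsIdempotentElem e ∧ IsNilpotent (x - e) ∧
      ∀ f : R, Commute f x → Commute f e := by
  obtain ⟨m, hm⟩ := hx
  set M := m + 1 with hMdef
  have hm' : (x - x ^ 2) ^ M = 0 := by rw [pow_succ, hm, zero_mul]
  have hM0 : M ≠ 0 := Nat.succ_ne_zero m
  refine ⟨1 - (1 - x ^ M) ^ M, isIdempotentElem_one_sub_one_sub_pow_pow x M hm', ?_, ?_⟩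
  · -- nilpotency of `x - e`
    set P : Polynomial ℤ := 1 - (1 - Polynomial.X ^ M) ^ M with hP
    have H₁ : (Polynomial.X : Polynomial ℤ) ∣ P := by
      have h := sub_dvd_pow_sub_pow 1 ((1 : Polynomial ℤ) - Polynomial.X ^ M) M
      rw [sub_sub_cancel, one_pow] at h
      exact dvd_trans (dvd_pow_self _ hM0) h
    have H₂ : ((1 : Polynomial ℤ) - Polynomial.X) ∣ 1 - P := by
      have h : ((1 : Polynomial ℤ) - Polynomial.X) ∣ 1 - Polynomial.X ^ M := by
        simpa using sub_dvd_pow_sub_pow (1 : Polynomial ℤ) Polynomial.X M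
      have h2 : ((1 : Polynomial ℤ) - Polynomial.X ^ M) ∣ (1 - Polynomial.X ^ M) ^ M :=
        dvd_pow_self _ hM0
      rw [hP, sub_sub_cancel]
      exact dvd_trans h h2
    have hd1 : (Polynomial.X : Polynomial ℤ) ∣ Polynomial.X - P :=
      dvd_sub dvd_rfl H₁
    have hd2 : ((1 : Polynomial ℤ) - Polynomial.X) ∣ Polynomial.X - P := by
      have h3 : (Polynomial.X : Polynomial ℤ) - P = (1 - P) - (1 - Polynomial.X) := by ring
      rw [h3]
      exact dvd_sub H₂ dvd_rfl
    have hcop : IsCoprime (Polynomial.X : Polynomial ℤ) (1 - Polynomial.X) :=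
      ⟨1, 1, by ring⟩
    obtain ⟨k, hk⟩ := hcop.mul_dvd hd1 hd2
    have heval : x - (1 - (1 - x ^ M) ^ M) = Polynomial.aeval x (Polynomial.X - P) := by
      simp [hP]
    refine ⟨M, ?_⟩
    have hpoly : (Polynomial.X - P) ^ M =
        (Polynomial.X - Polynomial.X ^ 2) ^ M * k ^ M := by
      have hb : (Polynomial.X : Polynomial ℤ) * (1 - Polynomial.X) =
          Polynomial.X - Polynomial.X ^ 2 := by ring
      rw [hk, hb, mul_pow]
    have hxx : (Polynomial.aeval x)
        ((Polynomial.X : Polynomial ℤ) - Polynomial.X ^ 2) = x - x ^ 2 := by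
      simp
    rw [heval, ← map_pow, hpoly, map_mul, map_pow, hxx, hm', zero_mul]
  · intro f hfx
    exact (Commute.one_right f).sub_right
      (((Commute.one_right f).sub_right (hfx.pow_right M)).pow_right M)

/-- Corner-ring version of the key lemma. -/
private lemma weakStar_corner {R : Type*} [Ring R] {f x : R} (hf : IsIdempotentElem f)
    (hfx : f * x = x) (hxf : x * f = x) (h : IsNilpotent (x - x ^ 2)) :
    ∃ n e : R, f * n * f = n ∧ f * e * f = e ∧ IsNilpotent n ∧
      IsIdempotentElem e ∧ n * e = e * n ∧ x = n + e := by
  obtain ⟨e₁, he₁, hnil, hcomm⟩ := weakStar_key x h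
  have hfxc : Commute f x := by rw [Commute, SemiconjBy, hfx, hxf]
  have hfe : Commute f e₁ := hcomm f hfxc
  have hxe : Commute x e₁ := hcomm x (Commute.refl x)
  have hfn : Commute f (x - e₁) := hfxc.sub_right hfe
  have corner : ∀ a : R, Commute f a → f * (a * f) * f = a * f := by
    intro a ha
    rw [← mul_assoc f a f, ha.eq, mul_assoc (a * f) f f, hf.eq,
      mul_assoc a f f, hf.eq]
  refine ⟨(x - e₁) * f, e₁ * f, corner _ hfn, corner _ hfe, ?_, ?_, ?_, ?_⟩
  · exact hfn.symm.isNilpotent_mul_right hnil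
  · exact he₁.mul_of_commute hfe.symm hf
  · have c1 : Commute (x - e₁) e₁ := hxe.sub_left (Commute.refl e₁)
    exact ((c1.mul_right hfn.symm).mul_left (hfe.mul_right (Commute.refl f))).eq
  · rw [← add_mul, sub_add_cancel, hxf]

/-- A ring is weak* nil clean if every element is the sum or difference of a
nilpotent and an idempotent which commute with each other. -/
def WeakStarNilClean (R : Type*) [Ring R] : Prop :=
  ∀ x : R, ∃ n e : R, IsNilpotent n ∧ IsIdempotentElem e ∧ n * e = e * n ∧
    (x = n + e ∨ x = n - e)

theorem stmt_11 {R : Type*} [Ring R] (hR : WeakStarNilClean R)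
    (f : R) (hf : IsIdempotentElem f) :
    ∀ x : R, x = f * x * f →
      ∃ n e : R, f * n * f = n ∧ f * e * f = e ∧ IsNilpotent n ∧
        IsIdempotentElem e ∧ n * e = e * n ∧ (x = n + e ∨ x = n - e) := by
  intro x hx
  have hfx : f * x = x := by
    conv_lhs => rw [hx, ← mul_assoc, ← mul_assoc, hf.eq]
    exact hx.symm
  have hxf : x * f = x := by
    conv_lhs => rw [hx, mul_assoc, mul_assoc, hf.eq, ← mul_assoc]
    exact hx.symm
  obtain ⟨n, e, hn, he, hc, hor⟩ := hR x
  have hne : Commute n e := hc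
  rcases hor with h | h
  · -- x = n + e : then x - x² is nilpotent
    have hnil : IsNilpotent (x - x ^ 2) := by
      have hid : x - x ^ 2 = n * (1 - n - (e + e)) := by
        subst h
        have h1 : (n + e) ^ 2 = n * n + n * e + (e * n + e * e) := by
          rw [sq, add_mul, mul_add, mul_add]
        rw [h1, he.eq, ← hc]
        noncomm_ring
      rw [hid]
      have hcom : Commute n (1 - n - (e + e)) :=
        ((Commute.one_right n).sub_right (Commute.refl n)).sub_right
          (hne.add_right hne)
      exact hcom.isNilpotent_mul_right hn
    obtain ⟨n₀, e₀, h1, h2, h3, h4, h5, h6⟩ := weakStar_corner hf hfx hxf hnil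
    exact ⟨n₀, e₀, h1, h2, h3, h4, h5, Or.inl h6⟩
  · -- x = n - e : apply the previous case to -x
    have hfx' : f * (-x) = -x := by rw [mul_neg, hfx]
    have hxf' : (-x) * f = -x := by rw [neg_mul, hxf]
    have hnil : IsNilpotent ((-x) - (-x) ^ 2) := by
      have hid : (-x) - (-x) ^ 2 = n * (-1 - n + (e + e)) := by
        subst h
        have h1 : (-(n - e)) ^ 2 = n * n - n * e - (e * n - e * e) := by
          rw [sq, neg_mul_neg, sub_mul, mul_sub, mul_sub]
        rw [h1, he.eq, ← hc]
        noncomm_ring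
      rw [hid]
      have hcom : Commute n (-1 - n + (e + e)) :=
        (((Commute.one_right n).neg_right.sub_right (Commute.refl n)).add_right
          (hne.add_right hne))
      exact hcom.isNilpotent_mul_right hn
    obtain ⟨n₀, e₀, h1, h2, h3, h4, h5, h6⟩ := weakStar_corner hf hfx' hxf' hnil
    refine ⟨-n₀, e₀, ?_, h2, h3.neg, h4, ?_, Or.inr ?_⟩
    · rw [mul_neg, neg_mul, h1]
    · rw [neg_mul, h5, mul_neg]
    · have h7 : x = -(n₀ + e₀) := by rw [← h6, neg_neg]
      rw [h7, neg_add, sub_eq_add_neg]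
end

section
/- Let R be a nontrivial ring with unity such that every element r ∈ R satisfies: r is nilpotent, or r - 1 is nilpotent, or r + 1 is nilpotent (i.e., R is {0,1}-weak nil clean). Then R is a local ring, i.e., R has exactly one maximal ideal. -/
theorem stmt_12 {R : Type*} [Ring R] [Nontrivial R]
    (h : ∀ r : R, IsNilpotent r ∨ IsNilpotent (r - 1) ∨ IsNilpotent (r + 1)) :
    ∃! I : Ideal R, I.IsMaximal := by
  -- key: if J is maximal and a ∉ J, then a has a left inverse
  have key : ∀ (J : Ideal R), J.IsMaximal → ∀ a : R, a ∉ J → ∃ b : R, b * a = 1 := by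
    intro J hJ a haJ
    have htop : J ⊔ Ideal.span {a} = ⊤ := hJ.1.2 _ (lt_of_le_of_ne le_sup_left (by
      intro hEq
      exact haJ (hEq ▸ (le_sup_right : Ideal.span {a} ≤ J ⊔ Ideal.span {a})
        (Ideal.subset_span rfl))))
    obtain ⟨z, hz, y, hy, hzy⟩ := Submodule.mem_sup.mp
      (htop ▸ Submodule.mem_top : (1 : R) ∈ J ⊔ Ideal.span {a})
    obtain ⟨r, hr⟩ := Ideal.mem_span_singleton'.mp hy
    -- z ∈ J proper, so z is not a unit; hence z is nilpotent, hence 1 - z is a unit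
    have hznu : ¬ IsUnit z := fun hu => hJ.1.1 (Ideal.eq_top_of_isUnit_mem _ hz hu)
    have hzn : IsNilpotent z := by
      rcases h z with hz' | hz' | hz'
      · exact hz'
      · exact absurd (by simpa using hz'.isUnit_add_one) hznu
      · exact absurd (by simpa using hz'.isUnit_sub_one) hznu
    have hu : IsUnit (1 - z) := hzn.isUnit_one_sub
    obtain ⟨u, hu'⟩ := hu
    refine ⟨↑u⁻¹ * r, ?_⟩
    have hra : r * a = 1 - z := by rw [hr, ← hzy]; abel
    rw [mul_assoc, hra, ← hu', u.inv_mul]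
  obtain ⟨I, hI⟩ := Ideal.exists_maximal R
  refine ⟨I, hI, fun J hJ => ?_⟩
  have le : ∀ (I J : Ideal R), I.IsMaximal → J.IsMaximal → I ≤ J := by
    intro I J hI hJ a haI
    by_contra haJ
    obtain ⟨b, hb⟩ := key J hJ a haJ
    exact hI.1.1 (Ideal.eq_top_of_isUnit_mem _ (I.mul_mem_left b haI) (hb ▸ isUnit_one))
  exact le_antisymm (le J I hJ hI) (le I J hI hJ)
end

section
/- Let R be a ring and S a set of idempotents of R such that every element r ∈ R can be written as r = n + e or r = n - e with n nilpotent, e ∈ S, and ne = en (i.e., R is S-weak* nil clean). Then S is the set of all idempotents of R, i.e., every idempotent of R belongs to S. -/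
private lemma aux_fix {R : Type*} [Ring R] {u n : R} (h : u * n = u)
    (hn : IsNilpotent n) : u = 0 := by
  obtain ⟨k, hk⟩ := hn
  have key : ∀ m : ℕ, u * n ^ m = u := by
    intro m
    induction m with
    | zero => simp
    | succ m ih => rw [pow_succ, ← mul_assoc, ih, h]
  have := key k
  rw [hk, mul_zero] at this
  exact this.symm

theorem stmt_13 {R : Type*} [Ring R] (S : Set R)
    (hS : ∀ e ∈ S, IsIdempotentElem e)
    (h : ∀ r : R, ∃ n e : R, e ∈ S ∧ IsNilpotent n ∧ n * e = e * n ∧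
      (r = n + e ∨ r = n - e)) :
    ∀ e : R, IsIdempotentElem e → e ∈ S := by
  intro f hf
  obtain ⟨n, e, heS, hn, hcomm, hcase⟩ := h f
  have he : IsIdempotentElem e := hS e heS
  -- f and e commute
  have hfe : f * e = e * f := by
    rcases hcase with hc | hc
    · rw [hc, add_mul, mul_add, hcomm]
    · rw [hc, sub_mul, mul_sub, hcomm]
  have hef : e * f = f * e := hfe.symm
  have hfef : f * e * f = f * e := by
    rw [mul_assoc, hef, ← mul_assoc, hf]
  have hfee : f * e * e = f * e := by
    rw [mul_assoc, he]
  have heq : f = e := by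
    rcases hcase with hc | hc
    · -- n = f - e
      have hne : n = f - e := by rw [hc]; abel
      have hu : (f - f * e) * n = f - f * e := by
        rw [hne, mul_sub, sub_mul, sub_mul, hf, hfef, hfee]
        abel
      have hu0 : f - f * e = 0 := aux_fix hu hn
      have hv : (e - f * e) * (n * n) = e - f * e := by
        have h1 : (e - f * e) * n = -(e - f * e) := by
          rw [hne, mul_sub, sub_mul, sub_mul, hef, he, hfef, hfee]
          abel
        rw [← mul_assoc, h1, neg_mul, h1, neg_neg]
      have hv0 : e - f * e = 0 := aux_fix hv ((Commute.refl n).isNilpotent_mul_right hn)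
      have h1 : f = f * e := by rwa [sub_eq_zero] at hu0
      have h2 : e = f * e := by rwa [sub_eq_zero] at hv0
      exact h1.trans h2.symm
    · -- n = f + e
      have hne : n = f + e := by rw [hc]; abel
      have hu : (f - f * e) * n = f - f * e := by
        rw [hne, mul_add, sub_mul, sub_mul, hf, hfef, hfee]
        abel
      have hu0 : f - f * e = 0 := aux_fix hu hn
      have hv : (e - f * e) * n = e - f * e := by
        rw [hne, mul_add, sub_mul, sub_mul, hef, he, hfef, hfee]
        abel
      have hv0 : e - f * e = 0 := aux_fix hv hn
      have h1 : f = f * e := by rwa [sub_eq_zero] at hu0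
      have h2 : e = f * e := by rwa [sub_eq_zero] at hv0
      exact h1.trans h2.symm
  rw [heq]
  exact heS
end

section
/- Let R be a weak* nil clean ring. Then R is an exchange ring; more precisely, for every x ∈ R there exist an idempotent f ∈ R and an element r ∈ R such that x - f = r·(x - x²). -/
theorem stmt_14 {R : Type*} [Ring R] (hR : WeakStarNilClean R) :
    ∀ x : R, ∃ f r : R, IsIdempotentElem f ∧ x - f = r * (x - x ^ 2) := by
  intro x
  obtain ⟨n, e, hn, he, hc, hx | hx⟩ := hR x
  · -- x = n + e, use f = e, u = 1 - n - 2e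
    have hee : e * e = e := he
    have h2e : (1 - 2*e) * (1 - 2*e) = 1 := by
      have : (1 - 2*e) * (1 - 2*e) = 1 - 2*e - 2*e + 4*(e*e) := by noncomm_ring
      rw [this, hee]; noncomm_ring
    have hcomm : Commute (1 - 2*e) n := by
      unfold Commute SemiconjBy
      have : (1 - 2*e) * n = n - 2*(e*n) := by noncomm_ring
      rw [this, ← hc]; noncomm_ring
    have hnil : IsNilpotent ((1 - 2*e) * n) := hcomm.isNilpotent_mul_left hn
    have hu1 : IsUnit (1 - 2*e) := ⟨⟨1 - 2*e, 1 - 2*e, h2e, h2e⟩, rfl⟩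
    have hu2 : IsUnit (1 - (1 - 2*e) * n) := hnil.isUnit_one_sub
    have hfact : (1 - 2*e) * (1 - (1 - 2*e) * n) = 1 - n - 2*e := by
      have : (1 - 2*e) * (1 - (1 - 2*e) * n) = (1 - 2*e) - ((1-2*e)*(1-2*e)) * n := by
        noncomm_ring
      rw [this, h2e]; noncomm_ring
    have hu : IsUnit (1 - n - 2*e) := hfact ▸ hu1.mul hu2
    refine ⟨e, ↑hu.unit⁻¹, he, ?_⟩
    have hxx : x - x ^ 2 = (1 - n - 2*e) * n := by
      have hA : (n + e) - (n + e) ^ 2 = n - n*n - (e*n) - (n*e) + (e - e*e) := by noncomm_ring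
      have hB : (1 - n - 2*e) * n = n - n*n - 2*(e*n) := by noncomm_ring
      rw [hx, hA, hee, hc, hB]; noncomm_ring
    rw [hxx, ← mul_assoc]
    have : (↑hu.unit⁻¹ : R) * (1 - n - 2*e) = 1 := hu.val_inv_mul
    rw [this, one_mul, hx]; noncomm_ring
  · -- x = n - e, use f = e, u = 1 - n
    have hee : e * e = e := he
    have hu : IsUnit (1 - n) := hn.isUnit_one_sub
    refine ⟨e, ↑hu.unit⁻¹, he, ?_⟩
    have hxx : x - x ^ 2 = (1 - n) * (n - 2*e) := by
      have hA : (n - e) - (n - e) ^ 2 = n - n*n + (e*n) + (n*e) - (e + e*e) := by noncomm_ring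
      have hB : (1 - n) * (n - 2*e) = n - 2*e - n*n + 2*(e*n) := by
        have h3 : (1 - n) * (n - 2*e) = n - 2*e - n*n + 2*(n*e) := by noncomm_ring
        rw [h3, hc]
      rw [hx, hA, hee, hc, hB]; noncomm_ring
    rw [hxx, ← mul_assoc]
    have : (↑hu.unit⁻¹ : R) * (1 - n) = 1 := hu.val_inv_mul
    rw [this, one_mul, hx]; noncomm_ring
end

section
/- A ring R is strongly nil clean (every element a ∈ R can be written as a = n + e with n nilpotent, e idempotent, and ne = en) if and only if R is weak* nil clean and the element 2 = 1 + 1 is nilpotent in R. -/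
/-- A ring is strongly nil clean if every element is the sum of a nilpotent and an
idempotent which commute with each other. -/
def StronglyNilClean (R : Type*) [Ring R] : Prop :=
  ∀ a : R, ∃ n e : R, IsNilpotent n ∧ IsIdempotentElem e ∧ n * e = e * n ∧ a = n + e

theorem stmt_15 {R : Type*} [Ring R] :
    StronglyNilClean R ↔ WeakStarNilClean R ∧ IsNilpotent (2 : R) := by
  constructor
  · intro h
    refine ⟨fun x => ?_, ?_⟩
    · obtain ⟨n, e, hn, he, hc, hx⟩ := h x
      exact ⟨n, e, hn, he, hc, Or.inl hx⟩
    · obtain ⟨n, e, hn, he, hc, hx⟩ := h (-1)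
      have hu : IsUnit (1 + n) := by
        obtain ⟨k, hk⟩ := hn
        exact IsNilpotent.isUnit_one_add ⟨k, hk⟩
      have he1 : e = -(1 + n) := by
        have := eq_sub_of_add_eq' hx.symm
        rw [this]; abel
      have hue : IsUnit e := he1 ▸ hu.neg
      have : e = 1 := by
        have := he
        unfold IsIdempotentElem at this
        have h2 : e * e = e * 1 := by rw [this, mul_one]
        exact hue.mul_left_cancel h2
      have : n = -2 := by
        rw [this] at hx
        have h' := eq_sub_of_add_eq hx.symm
        rw [h']; norm_num
      rw [this] at hn
      simpa using hn.neg
  · rintro ⟨hw, h2⟩ a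
    obtain ⟨n, e, hn, he, hc, hx | hx⟩ := hw a
    · exact ⟨n, e, hn, he, hc, hx⟩
    · have hce : Commute (2 : R) e := Commute.ofNat_left 2 e
      have h2e : IsNilpotent (2 * e : R) := hce.isNilpotent_mul_right h2
      have hcomm : Commute n (-(2 * e)) := by
        have hne : Commute n e := hc
        exact ((Commute.ofNat_right n 2).mul_right hne).neg_right
      have hn2e : IsNilpotent (n - 2 * e) := by
        have := Commute.isNilpotent_add hcomm hn h2e.neg
        simpa [sub_eq_add_neg] using this
      refine ⟨n - 2 * e, e, hn2e, he, ?_, ?_⟩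
      · have := he
        unfold IsIdempotentElem at this
        have h1 : (2 * e) * e = 2 * e := by rw [mul_assoc, this]
        have h2' : e * (2 * e) = 2 * e := by
          rw [← mul_assoc, mul_two e, ← two_mul e, h1]
        rw [sub_mul, mul_sub, hc, h1, h2']
      · rw [hx, two_mul]; abel
end

section
/- Let R be a weak* nil clean ring in which the element 2 = 1 + 1 is nilpotent. Then R is strongly π-regular: for every a ∈ R there exist a natural number k ≥ 1 and elements b, c ∈ R such that a^k = a^(k+1)·b and a^k = c·a^(k+1). -/
private lemma aux_sum_case {R : Type*} [Ring R] (n e : R) (hn : IsNilpotent n)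
    (he : IsIdempotentElem e) (hc : n * e = e * n) :
    ∃ k : ℕ, 1 ≤ k ∧ ∃ b c : R,
      (n + e) ^ k = (n + e) ^ (k + 1) * b ∧ (n + e) ^ k = c * (n + e) ^ (k + 1) := by
  set a := n + e with ha
  have hce : Commute n e := hc
  have hca : Commute a n := by
    simpa [ha] using (Commute.add_left (Commute.refl n) hce.symm)
  have hcae : Commute a e := by
    simpa [ha] using (Commute.add_left hce (Commute.refl e))
  obtain ⟨k0, hk0⟩ := id hn
  refine ⟨max k0 1, le_max_right _ _, ?_⟩
  obtain ⟨k', hk'⟩ : ∃ k', max k0 1 = k' + 1 := ⟨max k0 1 - 1, by omega⟩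
  rw [hk']
  have hnk : n ^ (k' + 1) = 0 := by
    calc n ^ (k' + 1) = n ^ k0 * n ^ (k' + 1 - k0) := by
          rw [← pow_add]; congr 1; omega
      _ = 0 := by rw [hk0, zero_mul]
  set k := k' + 1 with hk
  -- a^k * (1 - e) = 0, hence a^k = a^k * e
  have hf : a * (1 - e) = n * (1 - e) := by
    rw [mul_sub, mul_sub, mul_one, mul_one, ha, add_mul, he.eq]
    abel
  have hcf : Commute a (1 - e) := (Commute.one_right a).sub_right hcae
  have hcnf : Commute n (1 - e) := (Commute.one_right n).sub_right hce
  have hfpow : (1 - e) ^ k = (1 - e) := IsIdempotentElem.pow_succ_eq k' he.one_sub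
  have hak : a ^ k * (1 - e) = 0 := by
    calc a ^ k * (1 - e) = a ^ k * (1 - e) ^ k := by rw [hfpow]
      _ = (a * (1 - e)) ^ k := (hcf.mul_pow k).symm
      _ = (n * (1 - e)) ^ k := by rw [hf]
      _ = n ^ k * (1 - e) ^ k := hcnf.mul_pow k
      _ = 0 := by rw [hnk, zero_mul]
  have hake : a ^ k = a ^ k * e := by
    have h := hak
    rw [mul_sub, mul_one, sub_eq_zero] at h
    exact h
  -- m = n * e is nilpotent, 1 + m is a unit
  have hmnil : IsNilpotent (n * e) := hce.isNilpotent_mul_right hn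
  obtain ⟨u, hu'⟩ := hmnil.isUnit_one_add
  have hme : n * e * e = n * e := by rw [mul_assoc, he.eq]
  have hcem : Commute e (n * e) := by
    calc e * (n * e) = (e * n) * e := (mul_assoc _ _ _).symm
      _ = (n * e) * e := by rw [hc]
  have hea : e * a = e + n * e := by
    rw [ha, mul_add, he.eq, ← hc]
    abel
  have hstep : a ^ (k + 1) = a ^ k * (1 + n * e) * e := by
    calc a ^ (k + 1) = a ^ k * a := by rw [pow_succ]
      _ = a ^ k * e * a := by rw [← hake]
      _ = a ^ k * (e * a) := by rw [mul_assoc]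
      _ = a ^ k * (e + n * e) := by rw [hea]
      _ = a ^ k * ((1 + n * e) * e) := by rw [add_mul, one_mul, hme]
      _ = a ^ k * (1 + n * e) * e := by rw [mul_assoc]
  have hcm : Commute a (n * e) := hca.mul_right hcae
  have hcu : Commute a (1 + n * e) := (Commute.one_right a).add_right hcm
  have hceu : Commute e (1 + n * e) := (Commute.one_right e).add_right hcem
  have hcu' : Commute a (↑u⁻¹ : R) := by
    rw [← hu'] at hcu; exact hcu.units_inv_right
  have hceu' : Commute e (↑u⁻¹ : R) := by
    rw [← hu'] at hceu; exact hceu.units_inv_right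
  refine ⟨e * (↑u⁻¹ : R), e * (↑u⁻¹ : R), ?_, ?_⟩
  · have hb : a ^ (k + 1) * (e * (↑u⁻¹ : R)) = a ^ k := by
      calc a ^ (k + 1) * (e * (↑u⁻¹ : R))
          = a ^ k * (1 + n * e) * e * (e * (↑u⁻¹ : R)) := by rw [hstep]
        _ = a ^ k * (1 + n * e) * (e * e) * (↑u⁻¹ : R) := by
            rw [mul_assoc (a ^ k * (1 + n * e)), mul_assoc (a ^ k * (1 + n * e)), mul_assoc e]
        _ = a ^ k * (1 + n * e) * e * (↑u⁻¹ : R) := by rw [he.eq]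
        _ = a ^ k * (1 + n * e) * ((↑u⁻¹ : R) * e) := by
            rw [mul_assoc (a ^ k * (1 + n * e)), hceu'.eq]
        _ = a ^ k * ((1 + n * e) * (↑u⁻¹ : R)) * e := by
            rw [mul_assoc (a ^ k), mul_assoc (a ^ k), mul_assoc (1 + n * e)]
        _ = a ^ k * e := by rw [← hu', Units.mul_inv, mul_one]
        _ = a ^ k := hake.symm
    exact hb.symm
  · have hcomm : Commute (e * (↑u⁻¹ : R)) (a ^ (k + 1)) :=
      ((hcae.symm.pow_right (k + 1)).mul_left (hcu'.symm.pow_right (k + 1)))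
    rw [hcomm.eq]
    -- now same as first goal
    have hb : a ^ (k + 1) * (e * (↑u⁻¹ : R)) = a ^ k := by
      calc a ^ (k + 1) * (e * (↑u⁻¹ : R))
          = a ^ k * (1 + n * e) * e * (e * (↑u⁻¹ : R)) := by rw [hstep]
        _ = a ^ k * (1 + n * e) * (e * e) * (↑u⁻¹ : R) := by
            rw [mul_assoc (a ^ k * (1 + n * e)), mul_assoc (a ^ k * (1 + n * e)), mul_assoc e]
        _ = a ^ k * (1 + n * e) * e * (↑u⁻¹ : R) := by rw [he.eq]
        _ = a ^ k * (1 + n * e) * ((↑u⁻¹ : R) * e) := by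
            rw [mul_assoc (a ^ k * (1 + n * e)), hceu'.eq]
        _ = a ^ k * ((1 + n * e) * (↑u⁻¹ : R)) * e := by
            rw [mul_assoc (a ^ k), mul_assoc (a ^ k), mul_assoc (1 + n * e)]
        _ = a ^ k * e := by rw [← hu', Units.mul_inv, mul_one]
        _ = a ^ k := hake.symm
    exact hb.symm

theorem stmt_16 {R : Type*} [Ring R] (hR : WeakStarNilClean R)
    (h2 : IsNilpotent (2 : R)) :
    ∀ a : R, ∃ k : ℕ, 1 ≤ k ∧ ∃ b c : R,
      a ^ k = a ^ (k + 1) * b ∧ a ^ k = c * a ^ (k + 1) := by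
  intro a
  obtain ⟨n, e, hn, he, hc, hx | hx⟩ := hR a
  · rw [hx]; exact aux_sum_case n e hn he hc
  · -- a = n - e = (n - 2*e) + e
    have h2c : ∀ x : R, Commute (2 : R) x := fun x => by
      have h : ((2 : ℕ) : R) = (2 : R) := by norm_num
      exact h ▸ (Nat.cast_commute 2 x)
    have h2e : IsNilpotent ((2 : R) * e) := (h2c e).isNilpotent_mul_right h2
    have hcn2e : Commute n ((2 : R) * e) := ((h2c n).symm).mul_right hc
    have hn' : IsNilpotent (n - 2 * e) := hcn2e.isNilpotent_sub hn h2e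
    have h1 : (2 : R) * e * e = e * (2 * e) := by
      rw [mul_assoc 2 e e, he.eq, ← mul_assoc e 2 e, ← (h2c e).eq, mul_assoc 2 e e, he.eq]
    have hc' : (n - 2 * e) * e = e * (n - 2 * e) := by
      rw [sub_mul, mul_sub, hc, h1]
    have hx' : a = (n - 2 * e) + e := by rw [hx, two_mul]; abel
    rw [hx']
    exact aux_sum_case (n - 2 * e) e hn' he hc'
end

section
/- Let R be a ring and a ∈ R a weak* J-clean element, i.e., a = w + e or a = w - e for some w in the Jacobson radical J(R) and some idempotent e with ae = ea. Then a is strongly clean: there exist an idempotent f ∈ R and a unit u ∈ R such that a = f + u and fu = uf. -/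
private lemma jac_unit {R : Type*} [Ring R] {x : R}
    (hx : x ∈ Ideal.jacobson (⊥ : Ideal R)) (y : R) : IsUnit (y * x + 1) := by
  obtain ⟨z, hz⟩ := Ideal.mem_jacobson_iff.1 hx y
  rw [Ideal.mem_bot, sub_eq_zero] at hz
  have hz1 : z * (y * x + 1) = 1 := by rw [mul_add, mul_one, ← mul_assoc, hz]
  obtain ⟨z₂, hz2⟩ := Ideal.mem_jacobson_iff.1 hx (-(z * y))
  rw [Ideal.mem_bot, sub_eq_zero] at hz2
  have h' : z + z * y * x = 1 := by rw [add_comm]; exact hz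
  have hzs : z = 1 - z * y * x := eq_sub_of_add_eq h'
  have hzeq : z = -(z * y) * x + 1 := by
    have h2 : -(z * y) * x + 1 = 1 - z * y * x := by noncomm_ring
    rw [h2]; exact hzs
  have hzz : z₂ * z = 1 := by
    rw [hzeq, mul_add, mul_one, ← mul_assoc, hz2]
  have hu : z₂ = y * x + 1 := by
    calc z₂ = z₂ * (z * (y * x + 1)) := by rw [hz1, mul_one]
    _ = (z₂ * z) * (y * x + 1) := by rw [mul_assoc]
    _ = y * x + 1 := by rw [hzz, one_mul]
  exact ⟨⟨y * x + 1, z, by rw [← hu, hzz], hz1⟩, rfl⟩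

theorem stmt_17 {R : Type*} [Ring R] (a w e : R)
    (hw : w ∈ Ideal.jacobson (⊥ : Ideal R)) (he : IsIdempotentElem e)
    (hcomm : a * e = e * a) (ha : a = w + e ∨ a = w - e) :
    ∃ f u : R, IsIdempotentElem f ∧ IsUnit u ∧ a = f + u ∧ f * u = u * f := by
  have he' : e * e = e := he
  rcases ha with ha | ha
  · -- a = w + e : take f = 1 - e, u = w + (2e - 1)
    have hwe : w * e = e * w := by
      have h := hcomm
      rw [ha, add_mul, mul_add] at h
      exact add_right_cancel h
    have hv : (2 * e - 1) * (2 * e - 1) = 1 := by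
      calc (2 * e - 1) * (2 * e - 1) = 4 * (e * e) - 4 * e + 1 := by noncomm_ring
      _ = 1 := by rw [he']; noncomm_ring
    have hvu : IsUnit (2 * e - 1) := ⟨⟨2 * e - 1, 2 * e - 1, hv, hv⟩, rfl⟩
    have hcw : (2 * e - 1) * w = w * (2 * e - 1) := by
      calc (2 * e - 1) * w = 2 * (e * w) - w := by noncomm_ring
      _ = 2 * (w * e) - w := by rw [hwe]
      _ = w * (2 * e - 1) := by noncomm_ring
    have heq : ((2 * e - 1) * w + 1) * (2 * e - 1) = w + (2 * e - 1) := by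
      calc ((2 * e - 1) * w + 1) * (2 * e - 1)
          = (w * (2 * e - 1) + 1) * (2 * e - 1) := by rw [hcw]
      _ = w * ((2 * e - 1) * (2 * e - 1)) + (2 * e - 1) := by noncomm_ring
      _ = w + (2 * e - 1) := by rw [hv, mul_one]
    have hu : IsUnit (w + (2 * e - 1)) := heq ▸ (jac_unit hw (2 * e - 1)).mul hvu
    refine ⟨1 - e, w + (2 * e - 1), he.one_sub, hu, by rw [ha]; noncomm_ring, ?_⟩
    have hce : e * (w + (2 * e - 1)) = (w + (2 * e - 1)) * e := by
      calc e * (w + (2 * e - 1)) = e * w + 2 * (e * e) - e := by noncomm_ring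
      _ = w * e + 2 * (e * e) - e := by rw [hwe]
      _ = (w + (2 * e - 1)) * e := by noncomm_ring
    calc (1 - e) * (w + (2 * e - 1)) = (w + (2 * e - 1)) - e * (w + (2 * e - 1)) := by
          noncomm_ring
    _ = (w + (2 * e - 1)) - (w + (2 * e - 1)) * e := by rw [hce]
    _ = (w + (2 * e - 1)) * (1 - e) := by noncomm_ring
  · -- a = w - e : take f = 1 - e, u = w - 1
    have hwe : w * e = e * w := by
      have h := hcomm
      rw [ha, sub_mul, mul_sub] at h
      exact sub_left_inj.mp h
    have hu : IsUnit (w - 1) := by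
      have h1 := (jac_unit hw (-1)).neg
      have : -((-1) * w + 1) = w - 1 := by noncomm_ring
      rwa [this] at h1
    refine ⟨1 - e, w - 1, he.one_sub, hu, by rw [ha]; noncomm_ring, ?_⟩
    have hce : e * (w - 1) = (w - 1) * e := by
      calc e * (w - 1) = e * w - e := by noncomm_ring
      _ = w * e - e := by rw [hwe]
      _ = (w - 1) * e := by noncomm_ring
    calc (1 - e) * (w - 1) = (w - 1) - e * (w - 1) := by noncomm_ring
    _ = (w - 1) - (w - 1) * e := by rw [hce]
    _ = (w - 1) * (1 - e) := by noncomm_ring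
end

section
/- Let R be a weak* J-clean ring (every a ∈ R can be written as a = w + e or a = w - e with w ∈ J(R), e idempotent, and ae = ea) such that R/J(R) is Boolean. Then R is J-clean: every a ∈ R can be written as a = f + w with f idempotent and w ∈ J(R). -/
/-- A ring is weak* J-clean if every element is the sum or difference of an element
of the Jacobson radical and an idempotent commuting with the given element. -/
def WeakStarJClean (R : Type*) [Ring R] : Prop :=
  ∀ a : R, ∃ w e : R, w ∈ Ideal.jacobson (⊥ : Ideal R) ∧ IsIdempotentElem e ∧
    a * e = e * a ∧ (a = w + e ∨ a = w - e)

theorem stmt_19 {R : Type*} [Ring R] (hR : WeakStarJClean R)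
    (hbool : ∀ x : R, x * x - x ∈ Ideal.jacobson (⊥ : Ideal R)) :
    ∀ a : R, ∃ f w : R, IsIdempotentElem f ∧ w ∈ Ideal.jacobson (⊥ : Ideal R) ∧
      a = f + w := by
  intro a
  obtain ⟨w, e, hw, he, _, hcase⟩ := hR a
  have h2 : (2 : R) ∈ Ideal.jacobson (⊥ : Ideal R) := by
    have := hbool (-1)
    simpa [two_mul, one_add_one_eq_two] using this
  rcases hcase with h | h
  · exact ⟨e, w, he, hw, by rw [h, add_comm]⟩
  · refine ⟨e, w - 2 * e, he, ?_, by rw [h]; noncomm_ring⟩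
    have : (2 : R) * e = e • (2 : R) := by rw [smul_eq_mul, two_mul, mul_two]
    rw [this]
    exact Submodule.sub_mem _ hw (Submodule.smul_mem _ e h2)
end
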